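/- For all positive integers γ and δ there exists a constant C > 0 such that for every integer N ≥ 2 and every finite set A ⊆ {−N, −N+1, …, N} of integers, A can be partitioned into at most 2^{C·√(log₂ N)} pairwise disjoint (γ,δ)-free subsets whose union is A. -/

import Mathlib

private lemma digit_rep {q : ℕ} (hq : 0 < q) : ∀ (t n : ℕ), n < q ^ t →
    n = ∑ i ∈ Finset.range t, n / q ^ i % q * q ^ i := by
  intro t
  induction t with
  | zero => intro n hn; simpa using Nat.lt_one_iff.mp (by simpa using hn)
  | succ t ih =>
    intro n hn
    have hdiv : n / q < q ^ t := by
      rw [Nat.div_lt_iff_lt_mul hq]; rw [pow_succ] at hn; exact hn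
    have key := ih (n / q) hdiv
    rw [Finset.sum_range_succ']
    have h1 : ∀ i, n / q ^ (i + 1) % q * q ^ (i + 1)
        = (n / q) / q ^ i % q * q ^ i * q := by
      intro i
      rw [Nat.div_div_eq_div_mul, ← pow_succ']
      ring
    simp only [h1]
    rw [← Finset.sum_mul, ← key, pow_zero, mul_one, Nat.div_one, mul_comm]
    exact (Nat.div_add_mod n q).symm

private lemma zero_of_sum {q : ℤ} : ∀ (t : ℕ) (f : ℕ → ℤ),
    (∀ i, i < t → |f i| < q) → ∑ i ∈ Finset.range t, f i * q ^ i = 0 →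
    ∀ i, i < t → f i = 0 := by
  intro t
  induction t with
  | zero => intro f _ _ i hi; omega
  | succ t ih =>
    intro f hf hsum i hi
    rw [Finset.sum_range_succ'] at hsum
    have h1 : ∀ j, f (j + 1) * q ^ (j + 1) = f (j + 1) * q ^ j * q := by
      intro j; ring
    simp only [h1] at hsum
    rw [← Finset.sum_mul, pow_zero, mul_one] at hsum
    set T := ∑ j ∈ Finset.range t, f (j + 1) * q ^ j with hT
    have hq0 : 0 < q := lt_of_le_of_lt (abs_nonneg (f 0)) (hf 0 (by omega))
    have hdvd : q ∣ f 0 := ⟨-T, by linarith⟩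
    have hf0 : f 0 = 0 := by
      obtain ⟨k, hk⟩ := hdvd
      have : |f 0| < q := hf 0 (by omega)
      rw [hk, abs_mul, abs_of_pos hq0] at this
      have : |k| = 0 := by nlinarith [abs_nonneg k]
      simp [hk, abs_eq_zero.mp this]
    have hT0 : T = 0 := by
      have : T * q = 0 := by linarith
      rcases mul_eq_zero.mp this with h | h
      · exact h
      · omega
    rcases Nat.eq_zero_or_pos i with rfl | hpos
    · exact hf0
    · obtain ⟨j, rfl⟩ : ∃ j, i = j + 1 := ⟨i - 1, by omega⟩
      exact ih (fun j => f (j + 1)) (fun j hj => hf (j + 1) (by omega)) hT0 j (by omega)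

private lemma sum_lt_pow {w : ℕ} (hw : 0 < w) : ∀ (t : ℕ) (f : ℕ → ℕ),
    (∀ i, i < t → f i < w) → ∑ i ∈ Finset.range t, f i * w ^ i < w ^ t := by
  obtain ⟨v, rfl⟩ : ∃ v, w = v + 1 := ⟨w - 1, by omega⟩
  intro t
  induction t with
  | zero => simp
  | succ t ih =>
    intro f hf
    rw [Finset.sum_range_succ]
    have h1 := ih f (fun i hi => hf i (by omega))
    have h2 : f t * (v + 1) ^ t ≤ v * (v + 1) ^ t :=
      Nat.mul_le_mul_right _ (by have := hf t (by omega); omega)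
    calc ∑ i ∈ Finset.range t, f i * (v + 1) ^ i + f t * (v + 1) ^ t
        < (v + 1) ^ t + v * (v + 1) ^ t := by omega
      _ = (v + 1) ^ (t + 1) := by rw [pow_succ]; ring

private lemma split_eq {M a1 a2 b1 b2 : ℕ} (h1 : a1 < M) (h2 : a2 < M)
    (h : a1 + M * b1 = a2 + M * b2) : a1 = a2 ∧ b1 = b2 := by
  have hm : 0 < M := by omega
  have ha : a1 = a2 := by
    have := congrArg (· % M) h
    simpa [Nat.mul_comm M, Nat.add_mul_mod_self_right, Nat.mod_eq_of_lt h1,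
      Nat.mod_eq_of_lt h2] using this
  refine ⟨ha, ?_⟩
  subst ha
  have : M * b1 = M * b2 := by omega
  exact Nat.eq_of_mul_eq_mul_left hm this
/-- A set `X` of integers is `(γ,δ)`-free if no three distinct elements `a, b, c ∈ X`
satisfy `γ·a + δ·b = (γ+δ)·c`. -/
def IsFree (γ δ : ℤ) (X : Set ℤ) : Prop :=
  ¬ ∃ a ∈ X, ∃ b ∈ X, ∃ c ∈ X, a ≠ b ∧ a ≠ c ∧ b ≠ c ∧ γ * a + δ * b = (γ + δ) * c

set_option maxHeartbeats 2000000 in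
theorem stmt_8 (γ δ : ℤ) (hγ : 0 < γ) (hδ : 0 < δ) :
    ∃ C : ℝ, 0 < C ∧ ∀ N : ℕ, 2 ≤ N →
      ∀ A : Finset ℤ, A ⊆ Finset.Icc (-(N : ℤ)) (N : ℤ) →
        ∃ c : ℕ, (c : ℝ) ≤ 2 ^ (C * Real.sqrt (Real.logb 2 N)) ∧
          ∃ S : Fin c → Finset ℤ,
            (∀ i, IsFree γ δ ↑(S i)) ∧
            (∀ i j, i ≠ j → Disjoint (S i) (S j)) ∧
            Finset.univ.biUnion S = A := by
  have hγδ : (0:ℤ) < γ + δ := by linarith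
  set w : ℕ := (γ + δ).toNat with hw
  have hwZ : (w : ℤ) = γ + δ := Int.toNat_of_nonneg hγδ.le
  have hw2 : 2 ≤ w := by
    have : (2:ℤ) ≤ (w:ℤ) := by rw [hwZ]; omega
    exact_mod_cast this
  have hlw : (0:ℝ) ≤ Real.logb 2 w :=
    Real.logb_nonneg (by norm_num) (by exact_mod_cast Nat.one_le_iff_ne_zero.mpr (by omega))
  refine ⟨3 * (Real.logb 2 w + 3), by nlinarith, ?_⟩
  intro N hN A hA
  set t : ℕ := Nat.sqrt (Nat.log 2 N) + 2 with ht_def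
  set s : ℕ := 2 ^ t with hs_def
  set q : ℕ := w * s with hq_def
  have hs : 0 < s := pow_pos (by norm_num) _
  have hq : 0 < q := Nat.mul_pos (by omega) hs
  -- digits
  set dig : ℕ → ℤ → ℕ := fun i x => (x + N).toNat / q ^ i % q with hdig_def
  set col : ℤ → ℕ := fun x =>
    (∑ i ∈ Finset.range t, dig i x / s * w ^ i)
      + w ^ t * (∑ i ∈ Finset.range t, (dig i x % s) ^ 2) with hcol_def
  -- range fits
  have hNq : 2 * N < q ^ t := by
    have hlog := Nat.lt_pow_succ_log_self (by norm_num : 1 < 2) N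
    have ha : Nat.log 2 N < (Nat.sqrt (Nat.log 2 N) + 1) * (Nat.sqrt (Nat.log 2 N) + 1) :=
      Nat.lt_succ_sqrt (Nat.log 2 N)
    have ht2 : Nat.log 2 N + 2 ≤ t * t := by
      rw [ht_def]; nlinarith
    have hbase : 2 ^ (t + 1) ≤ q := by
      rw [hq_def, hs_def, pow_succ, mul_comm (2^t) 2]
      exact Nat.mul_le_mul_right _ hw2
    calc 2 * N < 2 * 2 ^ (Nat.log 2 N + 1) := by omega
      _ = 2 ^ (Nat.log 2 N + 2) := by rw [pow_succ, pow_succ]; ring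
      _ ≤ 2 ^ (t * t) := Nat.pow_le_pow_right (by norm_num) ht2
      _ ≤ 2 ^ ((t + 1) * t) := Nat.pow_le_pow_right (by norm_num) (by nlinarith)
      _ = (2 ^ (t + 1)) ^ t := pow_mul 2 (t + 1) t
      _ ≤ q ^ t := Nat.pow_le_pow_left hbase t
  have hx_toNat : ∀ x ∈ A, ((x + N).toNat : ℤ) = x + N ∧ (x + N).toNat < q ^ t := by
    intro x hx
    have hb := Finset.mem_Icc.mp (hA hx)
    constructor
    · exact Int.toNat_of_nonneg (by omega)
    · have : (x + N).toNat ≤ 2 * N := by omega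
      omega
  have hdig_lt : ∀ i x, dig i x < q := fun i x => Nat.mod_lt _ hq
  have hH_lt : ∀ i x, dig i x / s < w := by
    intro i x
    rw [Nat.div_lt_iff_lt_mul hs]
    have := hdig_lt i x
    omega
  have hhsum_lt : ∀ x, (∑ i ∈ Finset.range t, dig i x / s * w ^ i) < w ^ t :=
    fun x => sum_lt_pow (by omega) t _ (fun i _ => hH_lt i x)
  have hysum_le : ∀ x, (∑ i ∈ Finset.range t, (dig i x % s) ^ 2) ≤ t * s ^ 2 := by
    intro x
    calc ∑ i ∈ Finset.range t, (dig i x % s) ^ 2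
        ≤ ∑ _i ∈ Finset.range t, s ^ 2 := by
          refine Finset.sum_le_sum fun i _ => ?_
          have := Nat.mod_lt (dig i x) hs
          exact Nat.pow_le_pow_left (by omega) 2
      _ = t * s ^ 2 := by simp [Finset.sum_const, Finset.card_range, mul_comm]
  have hcol_lt : ∀ x, col x < w ^ t * (t * s ^ 2 + 1) := by
    intro x
    have h1 := hhsum_lt x
    have h2 := hysum_le x
    calc col x < w ^ t + w ^ t * (t * s ^ 2) :=
          add_lt_add_of_lt_of_le h1 (Nat.mul_le_mul_left _ h2)
      _ = w ^ t * (t * s ^ 2 + 1) := by ring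
  -- freeness of each color class
  have hfree : ∀ v : ℕ, IsFree γ δ ↑(A.filter fun x => col x = v) := by
    intro v
    rintro ⟨a, ha, b, hb, c0, hc0, hab, hac, hbc, heq⟩
    simp only [Finset.coe_filter, Set.mem_setOf_eq] at ha hb hc0
    obtain ⟨haA, hva⟩ := ha
    obtain ⟨hbA, hvb⟩ := hb
    obtain ⟨hcA, hvc⟩ := hc0
    obtain ⟨hna_eq, hna_lt⟩ := hx_toNat a haA
    obtain ⟨hnb_eq, hnb_lt⟩ := hx_toNat b hbA
    obtain ⟨hnc_eq, hnc_lt⟩ := hx_toNat c0 hcA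
    have rep : ∀ x : ℤ, x ∈ A → ((x + ↑N).toNat : ℤ)
        = ∑ i ∈ Finset.range t, ((dig i x : ℕ) : ℤ) * (q:ℤ) ^ i := by
      intro x hx
      obtain ⟨_, hlt⟩ := hx_toNat x hx
      have h := digit_rep hq t ((x + ↑N).toNat) hlt
      simp only [hdig_def]
      exact_mod_cast h
    have hsplit : ∀ x y : ℤ, col x = col y →
        (∑ i ∈ Finset.range t, dig i x / s * w ^ i
          = ∑ i ∈ Finset.range t, dig i y / s * w ^ i)
        ∧ (∑ i ∈ Finset.range t, (dig i x % s) ^ 2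
          = ∑ i ∈ Finset.range t, (dig i y % s) ^ 2) := by
      intro x y hxy
      simp only [hcol_def] at hxy
      exact split_eq (hhsum_lt x) (hhsum_lt y) hxy
    have hab_col : col a = col b := hva.trans hvb.symm
    have hac_col : col a = col c0 := hva.trans hvc.symm
    have hHeq : ∀ y : ℤ, col a = col y → ∀ i, i < t → dig i a / s = dig i y / s := by
      intro y hy i hi
      have h1 := (hsplit a y hy).1
      have h0 : ∑ j ∈ Finset.range t,
          (((dig j a / s : ℕ) : ℤ) - ((dig j y / s : ℕ) : ℤ)) * (w:ℤ) ^ j = 0 := by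
        have hc : (∑ j ∈ Finset.range t, ((dig j a / s : ℕ) : ℤ) * (w:ℤ) ^ j)
            = ∑ j ∈ Finset.range t, ((dig j y / s : ℕ) : ℤ) * (w:ℤ) ^ j := by
          exact_mod_cast h1
        simp only [sub_mul]
        rw [Finset.sum_sub_distrib, hc, sub_self]
      have hbound : ∀ j, j < t →
          |(((dig j a / s : ℕ) : ℤ) - ((dig j y / s : ℕ) : ℤ))| < (w:ℤ) := by
        intro j _
        have b1 : ((dig j a / s : ℕ) : ℤ) < (w:ℤ) := by exact_mod_cast hH_lt j a
        have b2 : ((dig j y / s : ℕ) : ℤ) < (w:ℤ) := by exact_mod_cast hH_lt j y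
        have p1 : (0:ℤ) ≤ ((dig j a / s : ℕ) : ℤ) := Int.natCast_nonneg _
        have p2 : (0:ℤ) ≤ ((dig j y / s : ℕ) : ℤ) := Int.natCast_nonneg _
        rw [abs_lt]
        constructor <;> linarith
      have hz := zero_of_sum t _ hbound h0 i hi
      have hz' : ((dig i a / s : ℕ) : ℤ) = ((dig i y / s : ℕ) : ℤ) := by linarith [hz]
      exact_mod_cast hz'
    have hHab : ∀ i, i < t → dig i a / s = dig i b / s := hHeq b hab_col
    have hHac : ∀ i, i < t → dig i a / s = dig i c0 / s := hHeq c0 hac_col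
    have hlin : γ * ((a + ↑N).toNat : ℤ) + δ * ((b + ↑N).toNat : ℤ)
        = (γ + δ) * ((c0 + ↑N).toNat : ℤ) := by
      rw [hna_eq, hnb_eq, hnc_eq]
      linear_combination heq
    have e1 : ∑ i ∈ Finset.range t,
        (γ * ((dig i a : ℕ) : ℤ) + δ * ((dig i b : ℕ) : ℤ)
          - (γ + δ) * ((dig i c0 : ℕ) : ℤ)) * (q:ℤ) ^ i = 0 := by
      have ea := rep a haA
      have eb := rep b hbA
      have ec := rep c0 hcA
      have : γ * ((a + ↑N).toNat : ℤ) + δ * ((b + ↑N).toNat : ℤ)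
          - (γ + δ) * ((c0 + ↑N).toNat : ℤ) = 0 := by linarith [hlin]
      rw [ea, eb, ec] at this
      rw [← this, Finset.mul_sum, Finset.mul_sum, Finset.mul_sum,
        ← Finset.sum_add_distrib, ← Finset.sum_sub_distrib]
      exact Finset.sum_congr rfl (fun i _ => by ring)
    have hFsum : ∑ i ∈ Finset.range t,
        (γ * ((dig i a % s : ℕ) : ℤ) + δ * ((dig i b % s : ℕ) : ℤ)
          - (γ + δ) * ((dig i c0 % s : ℕ) : ℤ)) * (q:ℤ) ^ i = 0 := by
      rw [← e1]
      refine Finset.sum_congr rfl (fun i hi => ?_)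
      have hi' := Finset.mem_range.mp hi
      have da : ((dig i a : ℕ) : ℤ) = (s:ℤ) * ((dig i a / s : ℕ) : ℤ) + ((dig i a % s : ℕ) : ℤ) := by
        exact_mod_cast congrArg (Nat.cast : ℕ → ℤ) (Nat.div_add_mod (dig i a) s).symm
      have db : ((dig i b : ℕ) : ℤ) = (s:ℤ) * ((dig i b / s : ℕ) : ℤ) + ((dig i b % s : ℕ) : ℤ) := by
        exact_mod_cast congrArg (Nat.cast : ℕ → ℤ) (Nat.div_add_mod (dig i b) s).symm
      have dc : ((dig i c0 : ℕ) : ℤ) = (s:ℤ) * ((dig i c0 / s : ℕ) : ℤ) + ((dig i c0 % s : ℕ) : ℤ) := by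
        exact_mod_cast congrArg (Nat.cast : ℕ → ℤ) (Nat.div_add_mod (dig i c0) s).symm
      have hb' : ((dig i b / s : ℕ) : ℤ) = ((dig i a / s : ℕ) : ℤ) := by
        exact_mod_cast (hHab i hi').symm
      have hc' : ((dig i c0 / s : ℕ) : ℤ) = ((dig i a / s : ℕ) : ℤ) := by
        exact_mod_cast (hHac i hi').symm
      rw [da, db, dc, hb', hc']
      ring
    have hqZ : ((q:ℕ) : ℤ) = (γ + δ) * (s:ℤ) := by
      rw [hq_def]
      push_cast
      rw [hwZ]
    have hFbound : ∀ i, i < t →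
        |γ * ((dig i a % s : ℕ) : ℤ) + δ * ((dig i b % s : ℕ) : ℤ)
          - (γ + δ) * ((dig i c0 % s : ℕ) : ℤ)| < ((q:ℕ) : ℤ) := by
      intro i _
      have m1 : dig i a % s < s := Nat.mod_lt _ hs
      have m2 : dig i b % s < s := Nat.mod_lt _ hs
      have m3 : dig i c0 % s < s := Nat.mod_lt _ hs
      have m1' : ((dig i a % s : ℕ) : ℤ) < (s:ℤ) := by exact_mod_cast m1
      have m2' : ((dig i b % s : ℕ) : ℤ) < (s:ℤ) := by exact_mod_cast m2
      have m3' : ((dig i c0 % s : ℕ) : ℤ) < (s:ℤ) := by exact_mod_cast m3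
      have p1 : (0:ℤ) ≤ ((dig i a % s : ℕ) : ℤ) := Int.natCast_nonneg _
      have p2 : (0:ℤ) ≤ ((dig i b % s : ℕ) : ℤ) := Int.natCast_nonneg _
      have p3 : (0:ℤ) ≤ ((dig i c0 % s : ℕ) : ℤ) := Int.natCast_nonneg _
      have u1 : γ * ((dig i a % s : ℕ) : ℤ) ≤ γ * ((s:ℤ) - 1) :=
        mul_le_mul_of_nonneg_left (by linarith) hγ.le
      have u2 : δ * ((dig i b % s : ℕ) : ℤ) ≤ δ * ((s:ℤ) - 1) :=
        mul_le_mul_of_nonneg_left (by linarith) hδ.le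
      have u3 : (0:ℤ) ≤ (γ + δ) * ((dig i c0 % s : ℕ) : ℤ) := mul_nonneg hγδ.le p3
      have u4 : (γ + δ) * ((dig i c0 % s : ℕ) : ℤ) < (γ + δ) * (s:ℤ) :=
        mul_lt_mul_of_pos_left m3' hγδ
      have u5 : (0:ℤ) ≤ γ * ((dig i a % s : ℕ) : ℤ) := mul_nonneg hγ.le p1
      have u6 : (0:ℤ) ≤ δ * ((dig i b % s : ℕ) : ℤ) := mul_nonneg hδ.le p2
      rw [hqZ, abs_lt]
      constructor
      · linarith [u4, u5, u6]
      · linarith [u1, u2, u3, hγδ]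
    have hFzero := zero_of_sum t _ hFbound hFsum
    -- pointwise relation on remainders
    have hyrel : ∀ i, i < t →
        γ * ((dig i a % s : ℕ) : ℤ) + δ * ((dig i b % s : ℕ) : ℤ)
          = (γ + δ) * ((dig i c0 % s : ℕ) : ℤ) := by
      intro i hi
      have := hFzero i hi
      linarith
    -- sums of squares are equal
    have hyab : (∑ i ∈ Finset.range t, (((dig i a % s : ℕ) : ℤ)) ^ 2)
        = ∑ i ∈ Finset.range t, (((dig i b % s : ℕ) : ℤ)) ^ 2 := by
      have h := (hsplit a b hab_col).2
      have : ((∑ i ∈ Finset.range t, (dig i a % s) ^ 2 : ℕ) : ℤ)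
          = ((∑ i ∈ Finset.range t, (dig i b % s) ^ 2 : ℕ) : ℤ) := by exact_mod_cast h
      push_cast at this
      exact this
    have hyac : (∑ i ∈ Finset.range t, (((dig i a % s : ℕ) : ℤ)) ^ 2)
        = ∑ i ∈ Finset.range t, (((dig i c0 % s : ℕ) : ℤ)) ^ 2 := by
      have h := (hsplit a c0 hac_col).2
      have : ((∑ i ∈ Finset.range t, (dig i a % s) ^ 2 : ℕ) : ℤ)
          = ((∑ i ∈ Finset.range t, (dig i c0 % s) ^ 2 : ℕ) : ℤ) := by exact_mod_cast h
      push_cast at this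
      exact this
    -- the quadratic identity
    have hsq : ∑ i ∈ Finset.range t, ((γ + δ) * ((dig i c0 % s : ℕ) : ℤ)) ^ 2
        = ∑ i ∈ Finset.range t,
            (γ * ((dig i a % s : ℕ) : ℤ) + δ * ((dig i b % s : ℕ) : ℤ)) ^ 2 :=
      Finset.sum_congr rfl (fun i hi => by rw [← hyrel i (Finset.mem_range.mp hi)])
    have hexp1 : ∑ i ∈ Finset.range t, ((γ + δ) * ((dig i c0 % s : ℕ) : ℤ)) ^ 2
        = (γ + δ) ^ 2 * ∑ i ∈ Finset.range t, (((dig i a % s : ℕ) : ℤ)) ^ 2 := by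
      rw [hyac, Finset.mul_sum]
      exact Finset.sum_congr rfl (fun i _ => by ring)
    have hexp2 : ∑ i ∈ Finset.range t,
        (γ * ((dig i a % s : ℕ) : ℤ) + δ * ((dig i b % s : ℕ) : ℤ)) ^ 2
        = γ ^ 2 * (∑ i ∈ Finset.range t, (((dig i a % s : ℕ) : ℤ)) ^ 2)
          + 2 * γ * δ * (∑ i ∈ Finset.range t,
              ((dig i a % s : ℕ) : ℤ) * ((dig i b % s : ℕ) : ℤ))
          + δ ^ 2 * (∑ i ∈ Finset.range t, (((dig i b % s : ℕ) : ℤ)) ^ 2) := by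
      rw [Finset.mul_sum, Finset.mul_sum, Finset.mul_sum,
        ← Finset.sum_add_distrib, ← Finset.sum_add_distrib]
      exact Finset.sum_congr rfl (fun i _ => by ring)
    have hPσ : (∑ i ∈ Finset.range t,
          ((dig i a % s : ℕ) : ℤ) * ((dig i b % s : ℕ) : ℤ))
        = ∑ i ∈ Finset.range t, (((dig i a % s : ℕ) : ℤ)) ^ 2 := by
      have hkey := hsq
      rw [hexp1, hexp2, ← hyab] at hkey
      have h2 : 2 * γ * δ * (∑ i ∈ Finset.range t,
            ((dig i a % s : ℕ) : ℤ) * ((dig i b % s : ℕ) : ℤ))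
          = 2 * γ * δ * ∑ i ∈ Finset.range t, (((dig i a % s : ℕ) : ℤ)) ^ 2 := by
        linear_combination -hkey
      exact mul_left_cancel₀ (by positivity) h2
    have hexp3 : ∑ i ∈ Finset.range t,
        (((dig i a % s : ℕ) : ℤ) - ((dig i b % s : ℕ) : ℤ)) ^ 2
        = (∑ i ∈ Finset.range t, (((dig i a % s : ℕ) : ℤ)) ^ 2)
          - 2 * (∑ i ∈ Finset.range t,
              ((dig i a % s : ℕ) : ℤ) * ((dig i b % s : ℕ) : ℤ))
          + ∑ i ∈ Finset.range t, (((dig i b % s : ℕ) : ℤ)) ^ 2 := by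
      rw [Finset.mul_sum, ← Finset.sum_sub_distrib, ← Finset.sum_add_distrib]
      exact Finset.sum_congr rfl (fun i _ => by ring)
    have hzero : ∑ i ∈ Finset.range t,
        (((dig i a % s : ℕ) : ℤ) - ((dig i b % s : ℕ) : ℤ)) ^ 2 = 0 := by
      rw [hexp3, ← hyab, hPσ]
      ring
    have hyeq : ∀ i, i < t → dig i a % s = dig i b % s := by
      intro i hi
      have h := (Finset.sum_eq_zero_iff_of_nonneg
        (fun i _ => sq_nonneg _)).mp hzero i (Finset.mem_range.mpr hi)
      have h2 : ((dig i a % s : ℕ) : ℤ) = ((dig i b % s : ℕ) : ℤ) := by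
        have := pow_eq_zero_iff (n := 2) (by norm_num) |>.mp h
        linarith [sub_eq_zero.mp this]
      exact_mod_cast h2
    have hdigeq : ∀ i, i < t → dig i a = dig i b := by
      intro i hi
      have h1 := hHab i hi
      have h2 := hyeq i hi
      calc dig i a = s * (dig i a / s) + dig i a % s := (Nat.div_add_mod _ s).symm
        _ = s * (dig i b / s) + dig i b % s := by rw [h1, h2]
        _ = dig i b := Nat.div_add_mod _ s
    have hnab : ((a + ↑N).toNat : ℤ) = ((b + ↑N).toNat : ℤ) := by
      rw [rep a haA, rep b hbA]
      exact Finset.sum_congr rfl (fun i hi => by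
        rw [hdigeq i (Finset.mem_range.mp hi)])
    rw [hna_eq, hnb_eq] at hnab
    exact hab (by linarith)
  -- packaging
  set K : Finset ℕ := A.image col with hK
  refine ⟨K.card, ?_, ?_⟩
  · have hcard : K.card ≤ w ^ t * (t * s ^ 2 + 1) := by
      have hsub : K ⊆ Finset.range (w ^ t * (t * s ^ 2 + 1)) := by
        intro v hv
        obtain ⟨x, _, rfl⟩ := Finset.mem_image.mp hv
        exact Finset.mem_range.mpr (hcol_lt x)
      simpa using Finset.card_le_card hsub
    have hstep : t * s ^ 2 + 1 ≤ 2 ^ (3 * t) := by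
      have h1 : t < 2 ^ t := Nat.lt_two_pow_self
      have hs2 : s ^ 2 = 2 ^ (2 * t) := by rw [hs_def, ← pow_mul]; ring_nf
      have h3 : (2:ℕ) ^ (3 * t) = 2 ^ t * 2 ^ (2 * t) := by rw [← pow_add]; ring_nf
      have h4 : (1:ℕ) ≤ 2 ^ (2 * t) := Nat.one_le_two_pow
      rw [hs2, h3]
      nlinarith
    have hwpos : (0:ℝ) < (w:ℝ) := by
      have : 0 < w := by omega
      exact_mod_cast this
    have hM : ((w ^ t * (t * s ^ 2 + 1) : ℕ) : ℝ)
        ≤ (2:ℝ) ^ ((Real.logb 2 w + 3) * t) := by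
      have hw_eq : (w:ℝ) = (2:ℝ) ^ (Real.logb 2 w) :=
        (Real.rpow_logb (by norm_num) (by norm_num) hwpos).symm
      have e1 : ((w:ℝ)) ^ t = (2:ℝ) ^ (Real.logb 2 w * t) := by
        rw [← Real.rpow_natCast ((w:ℝ)) t]
        conv_lhs => rw [hw_eq]
        rw [← Real.rpow_mul (by norm_num)]
      have e2 : ((2 ^ (3 * t) : ℕ) : ℝ) = (2:ℝ) ^ (((3 * t : ℕ) : ℝ)) := by
        rw [Real.rpow_natCast]; push_cast; ring
      calc ((w ^ t * (t * s ^ 2 + 1) : ℕ) : ℝ)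
          ≤ ((w ^ t * 2 ^ (3 * t) : ℕ) : ℝ) := by
            exact_mod_cast Nat.mul_le_mul_left _ hstep
        _ = (w:ℝ) ^ t * ((2 ^ (3 * t) : ℕ) : ℝ) := by push_cast; ring
        _ = (2:ℝ) ^ (Real.logb 2 w * t) * (2:ℝ) ^ (((3 * t : ℕ) : ℝ)) := by
            rw [e1, e2]
        _ = (2:ℝ) ^ (Real.logb 2 w * t + ((3 * t : ℕ) : ℝ)) :=
            (Real.rpow_add (by norm_num) _ _).symm
        _ = (2:ℝ) ^ ((Real.logb 2 w + 3) * t) := by push_cast; ring_nf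
    have hL1 : (1:ℝ) ≤ Real.logb 2 N := by
      have h2 : Real.logb 2 2 ≤ Real.logb 2 N :=
        Real.logb_le_logb_of_le (by norm_num) (by norm_num) (by exact_mod_cast hN)
      rwa [Real.logb_self_eq_one (by norm_num)] at h2
    have hsq1 : (1:ℝ) ≤ Real.sqrt (Real.logb 2 N) := Real.one_le_sqrt.mpr hL1
    have hLt : (t:ℝ) ≤ 3 * Real.sqrt (Real.logb 2 N) := by
      have hm2 : ((Nat.log 2 N : ℕ) : ℝ) ≤ Real.logb 2 N := by
        have hpow : (2:ℕ) ^ (Nat.log 2 N) ≤ N := Nat.pow_log_le_self 2 (by omega)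
        have hpowR : (2:ℝ) ^ ((Nat.log 2 N : ℕ) : ℝ) ≤ (N:ℝ) := by
          rw [Real.rpow_natCast]; exact_mod_cast hpow
        have := Real.logb_le_logb_of_le (by norm_num : (1:ℝ) < 2)
          (by positivity) hpowR
        rwa [Real.logb_rpow (by norm_num) (by norm_num)] at this
      have h5 : (Nat.sqrt (Nat.log 2 N) : ℝ) ≤ Real.sqrt (Real.logb 2 N) :=
        le_trans Real.nat_sqrt_le_real_sqrt (Real.sqrt_le_sqrt hm2)
      have ht_cast : (t:ℝ) = (Nat.sqrt (Nat.log 2 N) : ℝ) + 2 := by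
        rw [ht_def]; push_cast; ring
      rw [ht_cast]; linarith
    calc (K.card : ℝ) ≤ ((w ^ t * (t * s ^ 2 + 1) : ℕ) : ℝ) := by exact_mod_cast hcard
      _ ≤ (2:ℝ) ^ ((Real.logb 2 w + 3) * t) := hM
      _ ≤ (2:ℝ) ^ (3 * (Real.logb 2 w + 3) * Real.sqrt (Real.logb 2 N)) := by
          apply Real.rpow_le_rpow_of_exponent_le (by norm_num)
          have h6 : (Real.logb 2 w + 3) * (t:ℝ)
              ≤ (Real.logb 2 w + 3) * (3 * Real.sqrt (Real.logb 2 N)) :=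
            mul_le_mul_of_nonneg_left hLt (by linarith)
          linarith [h6]
  · refine ⟨fun i => A.filter fun x => col x = (K.equivFin.symm i : ℕ), ?_, ?_, ?_⟩
    · intro i; exact hfree _
    · intro i j hij
      rw [Finset.disjoint_left]
      intro x hxi hxj
      simp only [Finset.mem_filter] at hxi hxj
      apply hij
      have : K.equivFin.symm i = K.equivFin.symm j :=
        Subtype.ext (hxi.2 ▸ hxj.2 ▸ rfl)
      exact K.equivFin.symm.injective this
    · ext x
      simp only [Finset.mem_biUnion, Finset.mem_univ, true_and, Finset.mem_filter]
      constructor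
      · rintro ⟨i, hx, _⟩; exact hx
      · intro hx
        have hcx : col x ∈ K := Finset.mem_image_of_mem col hx
        refine ⟨K.equivFin ⟨col x, hcx⟩, hx, ?_⟩
        rw [Equiv.symm_apply_apply]
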